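/- Consider a birth–death chain on the integers with ω(i,i+1) + ω(i,i−1) = 1, uniformly elliptic in the sense that ω(i,i+1) ∈ [δ, 1−δ] for some δ > 0. For any 1 ≤ n < i, there is a constant c(n, δ) (independent of ω and i) such that the quenched expected exit time satisfies E_ω^0[T_{−1} ∧ T_i] ≤ c(n, δ) · E_ω^n[T_{n−1} ∧ T_i]. -/

import Mathlib

/-- Boundary value problem characterizing the quenched exit time from `(a, m)`. -/
def BVP (W : ℕ → ℝ) (a m : ℕ) (u : ℕ → ℝ) : Prop :=
  u a = 0 ∧ u m = 0 ∧
    ∀ k, a < k → k < m → u k = 1 + W k * u (k + 1) + (1 - W k) * u (k - 1)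

/-- If a discrete harmonic function starts with a strict increase above a nonnegative
value and vanishes at the right endpoint, we get a contradiction. -/
lemma mono_contra (W : ℕ → ℝ) (hW : ∀ k, 0 < W k ∧ W k < 1)
    (h : ℕ → ℝ) (a m : ℕ) (ham : a + 1 ≤ m)
    (hharm : ∀ k, a < k → k < m → h k = W k * h (k + 1) + (1 - W k) * h (k - 1))
    (h0 : 0 ≤ h a) (hm : h m = 0) (hstep : h a < h (a + 1)) : False := by
  have key : ∀ k, a ≤ k → k < m → h a ≤ h k ∧ h k < h (k + 1) := by
    intro k hk
    induction k, hk using Nat.le_induction with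
    | base => intro _; exact ⟨le_refl _, hstep⟩
    | succ k hk ih =>
      intro hkm
      obtain ⟨h1, h2⟩ := ih (by omega)
      refine ⟨by linarith, ?_⟩
      have hh := hharm (k + 1) (by omega) hkm
      have e : k + 1 - 1 = k := by omega
      rw [e] at hh
      have hw := hW (k + 1)
      have hpos : 0 < (1 - W (k + 1)) * (h (k + 1) - h k) :=
        mul_pos (by linarith [hw.2]) (by linarith)
      nlinarith [hw.1]
  have hfin := key (m - 1) (by omega) (by omega)
  have e : m - 1 + 1 = m := by omega
  rw [e] at hfin
  linarith [hfin.1, hfin.2]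

/-- Minimum principle: solutions of the exit-time BVP are nonnegative. -/
lemma bvp_nonneg (W : ℕ → ℝ) (hW : ∀ k, 0 < W k ∧ W k < 1)
    (a m : ℕ) (u : ℕ → ℝ) (hu : BVP W a m u) :
    ∀ k, a ≤ k → k ≤ m → 0 ≤ u k := by
  obtain ⟨hua, hum, hrec⟩ := hu
  by_contra hcon
  push_neg at hcon
  obtain ⟨k, hak, hkm, hneg⟩ := hcon
  obtain ⟨k₀, hk₀, hmin⟩ := Finset.exists_min_image (Finset.Icc a m) u
    ⟨k, by simp [Finset.mem_Icc]; omega⟩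
  simp only [Finset.mem_Icc] at hk₀
  have hk₀neg : u k₀ < 0 :=
    lt_of_le_of_lt (hmin k (by simp [Finset.mem_Icc]; omega)) hneg
  have h1 : k₀ ≠ a := by intro e; rw [e, hua] at hk₀neg; linarith
  have h2 : k₀ ≠ m := by intro e; rw [e, hum] at hk₀neg; linarith
  have hrec₀ := hrec k₀ (by omega) (by omega)
  have hA : u k₀ ≤ u (k₀ + 1) := hmin (k₀ + 1) (by simp [Finset.mem_Icc]; omega)
  have hB : u k₀ ≤ u (k₀ - 1) := hmin (k₀ - 1) (by simp [Finset.mem_Icc]; omega)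
  have hw := hW k₀
  have p1 : W k₀ * u k₀ ≤ W k₀ * u (k₀ + 1) :=
    mul_le_mul_of_nonneg_left hA (by linarith [hw.1])
  have p2 : (1 - W k₀) * u k₀ ≤ (1 - W k₀) * u (k₀ - 1) :=
    mul_le_mul_of_nonneg_left hB (by linarith [hw.2])
  nlinarith

/-- Uniqueness at the first interior point. -/
lemma bvp_uniq1 (W : ℕ → ℝ) (hW : ∀ k, 0 < W k ∧ W k < 1)
    (a m : ℕ) (ham : a + 1 ≤ m) (u v : ℕ → ℝ)
    (hu : BVP W a m u) (hv : BVP W a m v) : u (a + 1) = v (a + 1) := by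
  obtain ⟨hua, hum, hurec⟩ := hu
  obtain ⟨hva, hvm, hvrec⟩ := hv
  by_contra hne
  rcases lt_or_gt_of_ne hne with hlt | hgt
  · exact mono_contra W hW (fun k => v k - u k) a m ham
      (fun k hh1 hh2 => by
        have h1 := hurec k hh1 hh2; have h2 := hvrec k hh1 hh2
        linarith)
      (by simp [hua, hva]) (by simp [hum, hvm]) (by simp [hua, hva]; linarith)
  · exact mono_contra W hW (fun k => u k - v k) a m ham
      (fun k hh1 hh2 => by
        have h1 := hurec k hh1 hh2; have h2 := hvrec k hh1 hh2
        linarith)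
      (by simp [hua, hva]) (by simp [hum, hvm]) (by simp [hua, hva]; linarith)

/-- One-step comparison between exit problems on `(a, m)` and `(a+1, m)`. -/
lemma bvp_step (δ : ℝ) (hδ0 : 0 < δ) (W : ℕ → ℝ)
    (hW : ∀ k, δ ≤ W k ∧ W k ≤ 1 - δ)
    (a m : ℕ) (hm : a + 3 ≤ m) (u v : ℕ → ℝ)
    (hu : BVP W a m u) (hv : BVP W (a + 1) m v) :
    u (a + 1) ≤ (2 / δ) * v (a + 2) := by
  have hW01 : ∀ k, 0 < W k ∧ W k < 1 := fun k =>
    ⟨lt_of_lt_of_le hδ0 (hW k).1, by linarith [(hW k).2]⟩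
  have hupos := bvp_nonneg W hW01 a m u hu
  have hvpos := bvp_nonneg W hW01 (a + 1) m v hv
  obtain ⟨hua, hum, hurec⟩ := hu
  obtain ⟨hva, hvm, hvrec⟩ := hv
  -- u (a+1) = 1 + W(a+1) u(a+2)
  have hu1 : u (a + 1) = 1 + W (a + 1) * u (a + 2) := by
    have h := hurec (a + 1) (by omega) (by omega)
    have e : a + 1 - 1 = a := by omega
    rw [e, hua] at h; linarith
  -- v (a+2) ≥ 1
  have hv2 : 1 ≤ v (a + 2) := by
    have h := hvrec (a + 2) (by omega) (by omega)
    have e : a + 2 - 1 = a + 1 := by omega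
    rw [e, hva] at h
    have h3 : 0 ≤ v (a + 3) := hvpos (a + 3) (by omega) (by omega)
    have hw := hW01 (a + 2)
    nlinarith [hw.1]
  -- key comparison: u(a+2) - v(a+2) ≤ u(a+1)
  have hkey : u (a + 2) - v (a + 2) ≤ u (a + 1) := by
    by_contra hcon
    push_neg at hcon
    refine mono_contra W hW01 (fun k => u k - v k) (a + 1) m (by omega)
      (fun k hh1 hh2 => by
        have h1 := hurec k (by omega) hh2
        have h2 := hvrec k hh1 hh2
        linarith)
      ?_ (by simp [hum, hvm]) ?_
    · simp only [hva]
      have := hupos (a + 1) (by omega) (by omega)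
      linarith
    · simp only [hva]
      have e : a + 1 + 1 = a + 2 := by omega
      rw [e]; linarith
  have hw1 := hW (a + 1)
  have hw1' := hW01 (a + 1)
  have hu1pos : 0 ≤ u (a + 1) := hupos (a + 1) (by omega) (by omega)
  -- (1 - W(a+1)) u(a+1) ≤ 1 + W(a+1) v(a+2) ≤ 2 v(a+2)
  have hc1 : (1 - W (a + 1)) * u (a + 1) ≤ 1 + W (a + 1) * v (a + 2) := by nlinarith
  have hc2 : 1 + W (a + 1) * v (a + 2) ≤ 2 * v (a + 2) := by nlinarith [hw1'.2]
  have hc3 : δ * u (a + 1) ≤ 2 * v (a + 2) := by nlinarith [hw1.2]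
  rw [div_mul_eq_mul_div, le_div_iff₀ hδ0]
  linarith

/-- Shooting solution of the second-order recurrence, via a pair recursion. -/
noncomputable def solP (w : ℕ → ℝ) (c t : ℝ) : ℕ → ℝ × ℝ
  | 0 => (0, t)
  | k + 1 => ((solP w c t k).2,
      ((solP w c t k).2 - c - (1 - w (k + 1)) * (solP w c t k).1) / w (k + 1))

noncomputable def sol (w : ℕ → ℝ) (c t : ℝ) (k : ℕ) : ℝ := (solP w c t k).1

lemma sol_zero (w : ℕ → ℝ) (c t : ℝ) : sol w c t 0 = 0 := rfl

lemma sol_one (w : ℕ → ℝ) (c t : ℝ) : sol w c t 1 = t := rfl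

lemma sol_succ2 (w : ℕ → ℝ) (c t : ℝ) (k : ℕ) :
    sol w c t (k + 2)
      = (sol w c t (k + 1) - c - (1 - w (k + 1)) * sol w c t k) / w (k + 1) := by
  show (solP w c t (k + 2)).1 = _
  rw [show solP w c t (k + 2) = ((solP w c t (k + 1)).2,
      ((solP w c t (k + 1)).2 - c - (1 - w (k + 2)) * (solP w c t (k + 1)).1) / w (k + 2))
    from rfl]
  rw [show solP w c t (k + 1) = ((solP w c t k).2,
      ((solP w c t k).2 - c - (1 - w (k + 1)) * (solP w c t k).1) / w (k + 1)) from rfl]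
  rfl

lemma sol_rec (w : ℕ → ℝ) (c t : ℝ) (k : ℕ) (hk : 1 ≤ k) (hwk : w k ≠ 0) :
    sol w c t k = c + w k * sol w c t (k + 1) + (1 - w k) * sol w c t (k - 1) := by
  obtain ⟨l, rfl⟩ : ∃ l, k = l + 1 := ⟨k - 1, by omega⟩
  have e : l + 1 - 1 = l := by omega
  rw [e, show l + 1 + 1 = l + 2 from rfl, sol_succ2]
  field_simp
  ring

lemma sol_affine (w : ℕ → ℝ) (c t : ℝ) :
    ∀ k, sol w c t k = sol w c 0 k + t * sol w 0 1 k := by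
  intro k
  induction k using Nat.strong_induction_on with
  | _ k ih =>
    match k with
    | 0 => simp [sol_zero]
    | 1 => simp [sol_one]
    | k + 2 =>
      rw [sol_succ2, sol_succ2, sol_succ2, ih (k + 1) (by omega), ih k (by omega)]
      ring

lemma solB_diff_pos (w : ℕ → ℝ) (hw : ∀ k, 0 < w k ∧ w k < 1) :
    ∀ k, 0 < sol w 0 1 (k + 1) - sol w 0 1 k := by
  intro k
  induction k with
  | zero => rw [sol_one, sol_zero]; norm_num
  | succ k ih =>
    have hwk := hw (k + 1)
    have key : sol w 0 1 (k + 2) - sol w 0 1 (k + 1)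
        = ((1 - w (k + 1)) * (sol w 0 1 (k + 1) - sol w 0 1 k)) / w (k + 1) := by
      rw [sol_succ2]
      field_simp [ne_of_gt hwk.1]
      ring
    rw [key]
    exact div_pos (mul_pos (by linarith [hwk.2]) ih) hwk.1

lemma solB_pos (w : ℕ → ℝ) (hw : ∀ k, 0 < w k ∧ w k < 1) :
    ∀ m, 1 ≤ m → 0 < sol w 0 1 m := by
  intro m hm
  induction m with
  | zero => omega
  | succ l ih =>
    rcases Nat.eq_or_lt_of_le hm with h | h
    · rw [← h]; rw [sol_one]; norm_num
    · have h1 : 0 < sol w 0 1 l := ih (by omega)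
      have h2 := solB_diff_pos w hw l
      linarith

/-- Existence of a solution of the exit-time BVP. -/
lemma bvp_exists (W : ℕ → ℝ) (hW01 : ∀ k, 0 < W k ∧ W k < 1)
    (a m : ℕ) (ham : a < m) : ∃ u, BVP W a m u := by
  set w : ℕ → ℝ := fun j => W (a + j) with hwdef
  have hw01 : ∀ k, 0 < w k ∧ w k < 1 := fun k => hW01 (a + k)
  have hYpos : 0 < sol w 0 1 (m - a) := solB_pos w hw01 (m - a) (by omega)
  set t : ℝ := -(sol w 1 0 (m - a)) / sol w 0 1 (m - a) with ht
  refine ⟨fun k => sol w 1 t (k - a), ?_, ?_, ?_⟩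
  · show sol w 1 t (a - a) = 0
    rw [Nat.sub_self, sol_zero]
  · show sol w 1 t (m - a) = 0
    rw [sol_affine, ht]
    field_simp
    ring
  · intro k h1 h2
    have hrec := sol_rec w 1 t (k - a) (by omega) (ne_of_gt (hw01 (k - a)).1)
    have e1 : k - a + 1 = k + 1 - a := by omega
    have e2 : k - a - 1 = k - 1 - a := by omega
    have e3 : a + (k - a) = k := by omega
    simp only [hwdef] at hrec
    rw [e1, e2, e3] at hrec
    exact hrec

/-- Iterated comparison. -/
lemma bvp_master (δ : ℝ) (hδ0 : 0 < δ) (W : ℕ → ℝ)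
    (hW : ∀ k, δ ≤ W k ∧ W k ≤ 1 - δ) :
    ∀ q m, q + 2 ≤ m → ∀ u v, BVP W 0 m u → BVP W q m v →
      u 1 ≤ (2 / δ) ^ q * v (q + 1) := by
  have hW01 : ∀ k, 0 < W k ∧ W k < 1 := fun k =>
    ⟨lt_of_lt_of_le hδ0 (hW k).1, by linarith [(hW k).2]⟩
  intro q
  induction q with
  | zero =>
    intro m hm u v hu hv
    have h := bvp_uniq1 W hW01 0 m (by omega) u v hu hv
    simpa using h.le
  | succ q ih =>
    intro m hm u v hu hv
    obtain ⟨z, hz⟩ := bvp_exists W hW01 q m (by omega)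
    have h1 : u 1 ≤ (2 / δ) ^ q * z (q + 1) := ih m (by omega) u z hu hz
    have h2 : z (q + 1) ≤ (2 / δ) * v (q + 2) := bvp_step δ hδ0 W hW q m (by omega) z v hz hv
    have hpow : (0 : ℝ) ≤ (2 / δ) ^ q := by positivity
    calc u 1 ≤ (2 / δ) ^ q * z (q + 1) := h1
      _ ≤ (2 / δ) ^ q * ((2 / δ) * v (q + 2)) := mul_le_mul_of_nonneg_left h2 hpow
      _ = (2 / δ) ^ (q + 1) * v (q + 1 + 1) := by ring_nf

theorem stmt_12 (n : ℕ) (hn : 1 ≤ n) (δ : ℝ) (hδ0 : 0 < δ) (hδ1 : δ ≤ 1 / 2) :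
    ∃ c : ℝ, ∀ (i : ℕ), n < i → ∀ (ω : ℤ → ℝ),
      (∀ j, δ ≤ ω j ∧ ω j ≤ 1 - δ) →
      ∀ (f g : ℤ → ℝ),
        f (-1) = 0 → f (i : ℤ) = 0 →
        (∀ j : ℤ, -1 < j → j < (i : ℤ) →
          f j = 1 + ω j * f (j + 1) + (1 - ω j) * f (j - 1)) →
        (∀ j, 0 ≤ f j) →
        g ((n : ℤ) - 1) = 0 → g (i : ℤ) = 0 →
        (∀ j : ℤ, (n : ℤ) - 1 < j → j < (i : ℤ) →
          g j = 1 + ω j * g (j + 1) + (1 - ω j) * g (j - 1)) →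
        (∀ j, 0 ≤ g j) →
        f 0 ≤ c * g (n : ℤ) := by
  refine ⟨(2 / δ) ^ n, ?_⟩
  intro i hi ω hω f g hf1 hf2 hfrec _hfpos hg1 hg2 hgrec _hgpos
  set W : ℕ → ℝ := fun k => ω ((k : ℤ) - 1) with hWdef
  have hWell : ∀ k, δ ≤ W k ∧ W k ≤ 1 - δ := fun k => hω _
  have hu : BVP W 0 (i + 1) (fun k => f ((k : ℤ) - 1)) := by
    refine ⟨by simpa using hf1, ?_, ?_⟩
    · show f (((i + 1 : ℕ) : ℤ) - 1) = 0
      have e : ((i + 1 : ℕ) : ℤ) - 1 = (i : ℤ) := by push_cast; ring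
      rw [e]; exact hf2
    · intro k h1 h2
      have hr := hfrec ((k : ℤ) - 1) (by omega) (by omega)
      show f ((k : ℤ) - 1) = 1 + W k * f (((k + 1 : ℕ) : ℤ) - 1)
          + (1 - W k) * f (((k - 1 : ℕ) : ℤ) - 1)
      have e1 : ((k + 1 : ℕ) : ℤ) - 1 = (k : ℤ) - 1 + 1 := by push_cast; ring
      have e2 : ((k - 1 : ℕ) : ℤ) - 1 = (k : ℤ) - 1 - 1 := by omega
      rw [e1, e2]
      exact hr
  have hv : BVP W n (i + 1) (fun k => g ((k : ℤ) - 1)) := by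
    refine ⟨by simpa using hg1, ?_, ?_⟩
    · show g (((i + 1 : ℕ) : ℤ) - 1) = 0
      have e : ((i + 1 : ℕ) : ℤ) - 1 = (i : ℤ) := by push_cast; ring
      rw [e]; exact hg2
    · intro k h1 h2
      have hr := hgrec ((k : ℤ) - 1) (by omega) (by omega)
      show g ((k : ℤ) - 1) = 1 + W k * g (((k + 1 : ℕ) : ℤ) - 1)
          + (1 - W k) * g (((k - 1 : ℕ) : ℤ) - 1)
      have e1 : ((k + 1 : ℕ) : ℤ) - 1 = (k : ℤ) - 1 + 1 := by push_cast; ring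
      have e2 : ((k - 1 : ℕ) : ℤ) - 1 = (k : ℤ) - 1 - 1 := by omega
      rw [e1, e2]
      exact hr
  have hmain := bvp_master δ hδ0 W hWell n (i + 1) (by omega)
    (fun k => f ((k : ℤ) - 1)) (fun k => g ((k : ℤ) - 1)) hu hv
  have e0 : ((1 : ℕ) : ℤ) - 1 = 0 := by norm_num
  have en : ((n + 1 : ℕ) : ℤ) - 1 = (n : ℤ) := by push_cast; ring
  rw [e0, en] at hmain
  exact hmain
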